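/- Let x ∈ ℝᴺ with first coordinate a and truncation x' ∈ ℝ^{N-1} (so x = (a, x')). Let B = (z | P) be an n×N matrix with first column z ∈ ℝⁿ and P an n×(N-1) matrix with PP^T invertible. Then x^T (I_N - B^T (BB^T)^{-1} B) x = (x')^T (I_{N-1} - P^T (PP^T)^{-1} P) x' + (a - z^T (PP^T)^{-1} P x')² / (1 + z^T (PP^T)^{-1} z). -/

import Mathlib

open Matrix

lemma quad_aux {m l : Type*} [Fintype m] [Fintype l] [DecidableEq l]
    (A : Matrix m m ℝ) (D : Matrix m l ℝ) (v : l → ℝ) :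
    v ⬝ᵥ ((1 - Dᵀ * A * D) *ᵥ v) = v ⬝ᵥ v - (D *ᵥ v) ⬝ᵥ (A *ᵥ (D *ᵥ v)) := by
  rw [sub_mulVec, one_mulVec, dotProduct_sub, Matrix.mul_assoc, ← mulVec_mulVec,
    dotProduct_mulVec, vecMul_transpose, mulVec_mulVec]

/-- Squared-distance decomposition: with `x = (a, x')` and `B = (z | P)`,
`xᵀ(I - Bᵀ(BBᵀ)⁻¹B)x = x'ᵀ(I - Pᵀ(PPᵀ)⁻¹P)x' + (a - zᵀ(PPᵀ)⁻¹Px')²/(1 + zᵀ(PPᵀ)⁻¹z)`. -/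
theorem stmt1 (n k : ℕ) (a : ℝ) (x' : Fin k → ℝ)
    (z : Fin n → ℝ) (P : Matrix (Fin n) (Fin k) ℝ)
    (hP : IsUnit (P * Pᵀ).det)
    (B : Matrix (Fin n) (Fin 1 ⊕ Fin k) ℝ)
    (hB : B = Matrix.fromCols (Matrix.of fun i (_ : Fin 1) => z i) P)
    (x : Fin 1 ⊕ Fin k → ℝ) (hx : x = Sum.elim (fun _ => a) x') :
    x ⬝ᵥ ((1 - Bᵀ * (B * Bᵀ)⁻¹ * B) *ᵥ x) =
      x' ⬝ᵥ ((1 - Pᵀ * (P * Pᵀ)⁻¹ * P) *ᵥ x') +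
        (a - z ⬝ᵥ ((P * Pᵀ)⁻¹ *ᵥ (P *ᵥ x'))) ^ 2 /
          (1 + z ⬝ᵥ ((P * Pᵀ)⁻¹ *ᵥ z)) := by
  set S : Matrix (Fin n) (Fin n) ℝ := P * Pᵀ with hSdef
  have hST : Sᵀ = S := by rw [hSdef, transpose_mul, transpose_transpose]
  have h1 : S * S⁻¹ = 1 := mul_nonsing_inv S hP
  have h2 : S⁻¹ * S = 1 := nonsing_inv_mul S hP
  have hSinvT : S⁻¹ᵀ = S⁻¹ := by rw [transpose_nonsing_inv, hST]
  have hsE : ∀ i j, S⁻¹ i j = S⁻¹ j i := fun i j => by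
    conv_lhs => rw [← hSinvT]
    simp
  have hsymm : ∀ u v : Fin n → ℝ, u ⬝ᵥ S⁻¹ *ᵥ v = v ⬝ᵥ S⁻¹ *ᵥ u := by
    intro u v
    rw [dotProduct_mulVec, ← hSinvT, vecMul_transpose, hSinvT, dotProduct_comm]
  set α : ℝ := z ⬝ᵥ S⁻¹ *ᵥ z with hα
  have hQ : S⁻¹ = (S⁻¹ * P) * (S⁻¹ * P)ᵀ := by
    rw [transpose_mul, hSinvT, Matrix.mul_assoc, ← Matrix.mul_assoc P, ← hSdef, ← Matrix.mul_assoc,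
      h2, Matrix.one_mul]
  have hα0 : 0 ≤ α := by
    rw [hα, hQ, ← mulVec_mulVec, dotProduct_mulVec, ← transpose_transpose (S⁻¹ * P),
      vecMul_transpose]
    exact Finset.sum_nonneg fun i _ => mul_self_nonneg _
  have ht : (1 : ℝ) + α ≠ 0 := by positivity
  set C : Matrix (Fin n) (Fin 1) ℝ := Matrix.of fun i (_ : Fin 1) => z i with hC
  have hBBt : B * Bᵀ = C * Cᵀ + S := by
    rw [hB, transpose_fromCols, fromCols_mul_fromRows]
  have hRSC : Cᵀ * S⁻¹ * C = α • (1 : Matrix (Fin 1) (Fin 1) ℝ) := by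
    ext i j
    have hi : i = 0 := Subsingleton.elim _ _
    have hj : j = 0 := Subsingleton.elim _ _
    subst hi; subst hj
    simp only [Matrix.mul_apply, hC, hα, dotProduct, mulVec, Matrix.smul_apply, smul_eq_mul,
      Matrix.one_apply_eq, Matrix.of_apply, transpose_apply, Finset.sum_mul, Finset.mul_sum,
      mul_one]
    exact Finset.sum_congr rfl fun i _ => Finset.sum_congr rfl fun j _ => by rw [hsE]; ring
  set M : Matrix (Fin n) (Fin n) ℝ :=
    S⁻¹ - (1 + α)⁻¹ • (S⁻¹ * C * Cᵀ * S⁻¹) with hM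
  have hright : (C * Cᵀ + S) * M = 1 := by
    have e1 : C * Cᵀ * (S⁻¹ * C * Cᵀ * S⁻¹) = α • (C * (Cᵀ * S⁻¹)) := by
      calc C * Cᵀ * (S⁻¹ * C * Cᵀ * S⁻¹)
          = C * (Cᵀ * S⁻¹ * C) * (Cᵀ * S⁻¹) := by
            simp only [Matrix.mul_assoc]
        _ = α • (C * (Cᵀ * S⁻¹)) := by
            rw [hRSC, Matrix.mul_smul, Matrix.mul_one, Matrix.smul_mul]
    have e2 : S * (S⁻¹ * C * Cᵀ * S⁻¹) = C * (Cᵀ * S⁻¹) := by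
      rw [show S⁻¹ * C * Cᵀ * S⁻¹ = S⁻¹ * (C * (Cᵀ * S⁻¹)) by simp only [Matrix.mul_assoc],
        ← Matrix.mul_assoc, h1, Matrix.one_mul]
    rw [hM, Matrix.mul_sub]
    simp only [Matrix.mul_smul, add_mul, smul_add]
    rw [e1, e2, h1, Matrix.mul_assoc, smul_smul, ← add_smul]
    rw [show (1 + α)⁻¹ * α + (1 + α)⁻¹ = 1 from by field_simp; ring, one_smul]
    abel
  have hBinv : (B * Bᵀ)⁻¹ = M := by rw [hBBt]; exact inv_eq_right_inv hright
  have hCmv : ∀ c : Fin 1 → ℝ, C *ᵥ c = c 0 • z := by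
    intro c; funext i; simp [hC, mulVec, dotProduct, mul_comm]
  have hRmv : ∀ u : Fin n → ℝ, Cᵀ *ᵥ u = fun _ => z ⬝ᵥ u := by
    intro u; funext i; simp [hC, mulVec, dotProduct, transpose_apply]
  have hMmv : ∀ v : Fin n → ℝ,
      M *ᵥ v = S⁻¹ *ᵥ v - ((1 + α)⁻¹ * (z ⬝ᵥ S⁻¹ *ᵥ v)) • (S⁻¹ *ᵥ z) := by
    intro v
    rw [hM, sub_mulVec, smul_mulVec]
    congr 1
    rw [Matrix.mul_assoc, Matrix.mul_assoc, ← mulVec_mulVec, ← mulVec_mulVec, ← mulVec_mulVec,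
      hRmv, hCmv, mulVec_smul, smul_smul]
  set p : Fin n → ℝ := P *ᵥ x' with hp
  have hBx : B *ᵥ x = a • z + p := by
    rw [hB, hx, fromCols_mulVec_sumElim, hCmv]
  set β : ℝ := z ⬝ᵥ S⁻¹ *ᵥ p with hβ
  set γ : ℝ := p ⬝ᵥ S⁻¹ *ᵥ p with hγ
  rw [hBinv, quad_aux, quad_aux, hBx, hx, sumElim_dotProduct_sumElim, hMmv]
  have hxx : (fun _ : Fin 1 => a) ⬝ᵥ (fun _ : Fin 1 => a) = a * a := by
    simp [dotProduct]
  have hw1 : z ⬝ᵥ S⁻¹ *ᵥ (a • z + p) = a * α + β := by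
    simp only [mulVec_add, mulVec_smul, dotProduct_add, dotProduct_smul, smul_eq_mul, ← hα, ← hβ]
  have hw2 : (a • z + p) ⬝ᵥ S⁻¹ *ᵥ (a • z + p) = a * a * α + a * β + a * β + γ := by
    rw [mulVec_add, mulVec_smul, dotProduct_add, add_dotProduct, add_dotProduct,
      dotProduct_smul, smul_dotProduct, dotProduct_smul, smul_dotProduct, hsymm p z]
    simp only [smul_eq_mul, ← hα, ← hβ, ← hγ]; ring
  have hw3 : (a • z + p) ⬝ᵥ S⁻¹ *ᵥ z = a * α + β := by
    simp only [add_dotProduct, smul_dotProduct, hsymm p z, smul_eq_mul, ← hα, ← hβ]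
  rw [dotProduct_sub, dotProduct_smul, hw1, hw2, hw3, hxx]
  simp only [← hp, ← hγ, ← hβ, ← hα]
  field_simp
  have h3 : (1 + α)⁻¹ * (1 + α) = 1 := inv_mul_cancel₀ ht
  linear_combination (2 * α * a * β + β ^ 2 + α ^ 2 * a ^ 2) * h3
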